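/- arXiv:2006.04022 — 7 statements merged into one kernel-verified Lean document; each statement's English description precedes it below -/
import Mathlib

section
/- Let S be a nonempty closed convex subset of a Hilbert space H, and let x⁰, x ∈ H with x⁰ ∉ S. Define W(x) = {y ∈ H : ⟨y − x, x⁰ − x⟩ ≤ 0}. If S ⊆ W(x), then x lies in the closed ball centered at (x⁰ + x̄)/2 with radius ρ/2, where x̄ = P_S(x⁰) and ρ = ‖x⁰ − P_S(x⁰)‖. -/
open scoped RealInnerProductSpace

/-- `p` is the metric projection of `x` onto `C`. -/
def IsProj {H : Type*} [NormedAddCommGroup H] [InnerProductSpace ℝ H]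
    (C : Set H) (x p : H) : Prop :=
  p ∈ C ∧ ∀ y ∈ C, ‖x - p‖ ≤ ‖x - y‖

theorem stmt_1 {H : Type*} [NormedAddCommGroup H] [InnerProductSpace ℝ H] [CompleteSpace H]
    (S : Set H) (hS : S.Nonempty) (hSc : IsClosed S) (hSv : Convex ℝ S)
    (x0 x xbar : H) (hx0 : x0 ∉ S) (hxbar : IsProj S x0 xbar)
    (hW : S ⊆ {y : H | ⟪y - x, x0 - x⟫ ≤ 0}) :
    ‖x - (1 / 2 : ℝ) • (x0 + xbar)‖ ≤ ‖x0 - xbar‖ / 2 := by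
  have h : ⟪xbar - x, x0 - x⟫ ≤ 0 := hW hxbar.1
  have h' : ⟪x - x0, x - xbar⟫ ≤ 0 := by
    rw [show x - x0 = -(x0 - x) by abel, show x - xbar = -(xbar - x) by abel,
      inner_neg_neg, real_inner_comm]
    exact h
  have e : x - (1 / 2 : ℝ) • (x0 + xbar) = (1 / 2 : ℝ) • ((x - x0) + (x - xbar)) := by
    module
  have e2 : x0 - xbar = (x - xbar) - (x - x0) := by abel
  rw [e, e2, norm_smul]
  have key : ‖(x - x0) + (x - xbar)‖ ≤ ‖(x - xbar) - (x - x0)‖ := by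
    have h1 := norm_add_sq_real (x - x0) (x - xbar)
    have h2 := norm_sub_sq_real (x - xbar) (x - x0)
    have h3 : ⟪x - xbar, x - x0⟫ = ⟪x - x0, x - xbar⟫ := real_inner_comm _ _
    have := norm_nonneg ((x - x0) + (x - xbar))
    have := norm_nonneg ((x - xbar) - (x - x0))
    nlinarith
  have : ‖(1 / 2 : ℝ)‖ = 1 / 2 := by norm_num
  rw [this]
  linarith
end

section
/- Let C be a nonempty closed convex subset of a Hilbert space H, let {x^k} be a sequence in H and u ∈ H. If every weak cluster point of {x^k} belongs to C, and ‖x^k − u‖ ≤ ‖u − P_C(u)‖ for all k, then x^k converges strongly to P_C(u). -/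
open scoped RealInnerProductSpace
open Filter

/-- Weak convergence of a sequence in a real inner product space. -/
def WeakLim {H : Type*} [NormedAddCommGroup H] [InnerProductSpace ℝ H]
    (x : ℕ → H) (a : H) : Prop :=
  ∀ z : H, Tendsto (fun n => ⟪z, x n⟫) atTop (nhds ⟪z, a⟫)

/-- `a` is a weak cluster point of the sequence `x`. -/
def WeakClusterPt {H : Type*} [NormedAddCommGroup H] [InnerProductSpace ℝ H]
    (x : ℕ → H) (a : H) : Prop :=
  ∃ φ : ℕ → ℕ, StrictMono φ ∧ WeakLim (x ∘ φ) a

lemma weak_seq_compact {H : Type*} [NormedAddCommGroup H] [InnerProductSpace ℝ H]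
    [CompleteSpace H] (x : ℕ → H) (B : ℝ) (hB : ∀ n, ‖x n‖ ≤ B) :
    ∃ a : H, ∃ φ : ℕ → ℕ, StrictMono φ ∧
      ∀ z : H, Tendsto (fun n => ⟪z, x (φ n)⟫) atTop (nhds ⟪z, a⟫) := by
  have hB0 : 0 ≤ B := le_trans (norm_nonneg _) (hB 0)
  -- diagonal extraction via compactness of a product of intervals
  set s : Set (ℕ → ℝ) := Set.pi Set.univ (fun m => Set.Icc (-(‖x m‖ * B)) (‖x m‖ * B)) with hs_def
  have hs : IsCompact s := isCompact_univ_pi fun m => isCompact_Icc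
  have hmem : ∀ n, (fun m => ⟪x m, x n⟫) ∈ s := by
    intro n m _
    have h1 : |⟪x m, x n⟫| ≤ ‖x m‖ * ‖x n‖ := abs_real_inner_le_norm _ _
    have h2 : ‖x m‖ * ‖x n‖ ≤ ‖x m‖ * B :=
      mul_le_mul_of_nonneg_left (hB n) (norm_nonneg _)
    have := abs_le.mp (h1.trans h2)
    exact ⟨this.1, this.2⟩
  obtain ⟨g, -, φ, hφ, hg⟩ := hs.tendsto_subseq hmem
  have hcoord : ∀ m, Tendsto (fun n => ⟪x m, x (φ n)⟫) atTop (nhds (g m)) := by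
    intro m
    have := tendsto_pi_nhds.mp hg m
    simpa using this
  -- the set of z for which the inner products converge
  set K : Submodule ℝ H := (Submodule.span ℝ (Set.range x)).topologicalClosure with hK_def
  have hxK : ∀ n, x n ∈ K :=
    fun n => (Submodule.span ℝ (Set.range x)).le_topologicalClosure
      (Submodule.subset_span ⟨n, rfl⟩)
  have hspan : ∀ w ∈ Submodule.span ℝ (Set.range x),
      ∃ L : ℝ, Tendsto (fun n => ⟪w, x (φ n)⟫) atTop (nhds L) := by
    intro w hw
    induction hw using Submodule.span_induction with
    | mem w hw =>
        obtain ⟨m, rfl⟩ := hw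
        exact ⟨g m, hcoord m⟩
    | zero => exact ⟨0, by simp⟩
    | add w₁ w₂ _ _ h₁ h₂ =>
        obtain ⟨L₁, h₁⟩ := h₁
        obtain ⟨L₂, h₂⟩ := h₂
        exact ⟨L₁ + L₂, by simpa [inner_add_left] using h₁.add h₂⟩
    | smul c w _ h =>
        obtain ⟨L, h⟩ := h
        exact ⟨c * L, by simpa [real_inner_smul_left] using h.const_mul c⟩
  have hKconv : ∀ w ∈ K, ∃ L : ℝ, Tendsto (fun n => ⟪w, x (φ n)⟫) atTop (nhds L) := by
    intro w hw
    have hcau : CauchySeq (fun n => ⟪w, x (φ n)⟫) := by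
      rw [Metric.cauchySeq_iff]
      intro ε hε
      have hε3 : 0 < ε / 3 / (B + 1) := by positivity
      -- approximate w by an element of the span
      have hwcl : w ∈ closure ((Submodule.span ℝ (Set.range x) : Submodule ℝ H) : Set H) := hw
      obtain ⟨v, hv, hvw⟩ := Metric.mem_closure_iff.mp hwcl _ hε3
      obtain ⟨L, hL⟩ := hspan v hv
      have hLc : CauchySeq (fun n => ⟪v, x (φ n)⟫) := hL.cauchySeq
      rw [Metric.cauchySeq_iff] at hLc
      obtain ⟨N, hN⟩ := hLc (ε / 3) (by positivity)
      refine ⟨N, fun m hm n hn => ?_⟩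
      have hkey : ∀ k, |⟪w, x (φ k)⟫ - ⟪v, x (φ k)⟫| ≤ ε / 3 := by
        intro k
        have : ⟪w, x (φ k)⟫ - ⟪v, x (φ k)⟫ = ⟪w - v, x (φ k)⟫ := by
          rw [inner_sub_left]
        rw [this]
        have h1 : |⟪w - v, x (φ k)⟫| ≤ ‖w - v‖ * ‖x (φ k)‖ := abs_real_inner_le_norm _ _
        have h2 : ‖w - v‖ * ‖x (φ k)‖ ≤ ‖w - v‖ * (B + 1) := by
          apply mul_le_mul_of_nonneg_left ((hB _).trans (by linarith)) (norm_nonneg _)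
        have h3 : ‖w - v‖ * (B + 1) ≤ ε / 3 := by
          have : ‖w - v‖ ≤ ε / 3 / (B + 1) := by
            rw [← dist_eq_norm]; exact le_of_lt hvw
          calc ‖w - v‖ * (B + 1) ≤ (ε / 3 / (B + 1)) * (B + 1) :=
                mul_le_mul_of_nonneg_right this (by linarith)
            _ = ε / 3 := by field_simp
        linarith [h1.trans (h2.trans h3)]
      have hN' := hN m hm n hn
      rw [Real.dist_eq] at hN' ⊢
      have e1 := hkey m
      have e2 := hkey n
      have : |⟪w, x (φ m)⟫ - ⟪w, x (φ n)⟫| ≤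
          |⟪w, x (φ m)⟫ - ⟪v, x (φ m)⟫| + |⟪v, x (φ m)⟫ - ⟪v, x (φ n)⟫|
            + |⟪v, x (φ n)⟫ - ⟪w, x (φ n)⟫| := by
        apply (abs_sub_le _ (⟪v, x (φ m)⟫ : ℝ) _).trans
        have := abs_sub_le (⟪v, x (φ m)⟫ : ℝ) (⟪v, x (φ n)⟫ : ℝ) (⟪w, x (φ n)⟫ : ℝ)
        linarith
      rw [abs_sub_comm] at e2
      linarith
    exact cauchySeq_tendsto_of_complete hcau
  -- now every z: split using orthogonal projection onto K
  have hKc : IsClosed (K : Set H) := Submodule.isClosed_topologicalClosure _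
  haveI : CompleteSpace K := hKc.completeSpace_coe
  have hall : ∀ z : H, ∃ L : ℝ, Tendsto (fun n => ⟪z, x (φ n)⟫) atTop (nhds L) := by
    intro z
    obtain ⟨L, hL⟩ := hKconv _ (Submodule.orthogonalProjection K z).2
    refine ⟨L, ?_⟩
    have heq : ∀ n, ⟪z, x (φ n)⟫ = ⟪((Submodule.orthogonalProjection K z : H)), x (φ n)⟫ := by
      intro n
      have horth : z - Submodule.orthogonalProjection K z ∈ Kᗮ :=
        K.sub_starProjection_mem_orthogonal z
      have h0 : ⟪x (φ n), z - Submodule.orthogonalProjection K z⟫ = 0 :=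
        (Submodule.mem_orthogonal K _).mp horth _ (hxK _)
      have h0' : ⟪z - (Submodule.orthogonalProjection K z : H), x (φ n)⟫ = (0:ℝ) := by
        rw [real_inner_comm]; exact h0
      rw [inner_sub_left] at h0'
      linarith
    simpa only [heq] using hL
  -- build the limit functional
  choose f hf using hall
  have fadd : ∀ z₁ z₂, f (z₁ + z₂) = f z₁ + f z₂ := by
    intro z₁ z₂
    refine tendsto_nhds_unique (hf (z₁ + z₂)) ?_
    simpa [inner_add_left] using (hf z₁).add (hf z₂)
  have fsmul : ∀ (c : ℝ) z, f (c • z) = c * f z := by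
    intro c z
    refine tendsto_nhds_unique (hf (c • z)) ?_
    simpa [real_inner_smul_left] using (hf z).const_mul c
  have fbound : ∀ z, |f z| ≤ B * ‖z‖ := by
    intro z
    have h1 : Tendsto (fun n => |⟪z, x (φ n)⟫|) atTop (nhds |f z|) := (hf z).abs
    refine le_of_tendsto h1 (Eventually.of_forall fun n => ?_)
    have := abs_real_inner_le_norm z (x (φ n))
    calc |⟪z, x (φ n)⟫| ≤ ‖z‖ * ‖x (φ n)‖ := this
      _ ≤ ‖z‖ * B := mul_le_mul_of_nonneg_left (hB _) (norm_nonneg _)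
      _ = B * ‖z‖ := mul_comm _ _
  let F : H →L[ℝ] ℝ := LinearMap.mkContinuous
    { toFun := f, map_add' := fadd, map_smul' := fsmul } B
    (fun z => by simpa using fbound z)
  refine ⟨(InnerProductSpace.toDual ℝ H).symm F, φ, hφ, fun z => ?_⟩
  have : ⟪z, (InnerProductSpace.toDual ℝ H).symm F⟫ = f z := by
    rw [real_inner_comm]
    exact InnerProductSpace.toDual_symm_apply
  rw [this]
  exact hf z

theorem stmt_3 {H : Type*} [NormedAddCommGroup H] [InnerProductSpace ℝ H] [CompleteSpace H]
    (C : Set H) (hC : C.Nonempty) (hCc : IsClosed C) (hCv : Convex ℝ C)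
    (x : ℕ → H) (u p : H) (hp : IsProj C u p)
    (hcluster : ∀ a : H, WeakClusterPt x a → a ∈ C)
    (hbound : ∀ k, ‖x k - u‖ ≤ ‖u - p‖) :
    Tendsto x atTop (nhds p) := by
  set r : ℝ := ‖u - p‖ with hr_def
  have hr0 : 0 ≤ r := norm_nonneg _
  by_contra hcon
  rw [Metric.tendsto_atTop] at hcon
  push_neg at hcon
  obtain ⟨ε, hε, hfreq⟩ := hcon
  obtain ⟨ψ, hψ, hψε⟩ := extraction_of_frequently_atTop (frequently_atTop.mpr hfreq)
  -- the subsequence is bounded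
  have hbd : ∀ n, ‖x (ψ n)‖ ≤ r + ‖u‖ := by
    intro n
    calc ‖x (ψ n)‖ = ‖(x (ψ n) - u) + u‖ := by rw [sub_add_cancel]
      _ ≤ ‖x (ψ n) - u‖ + ‖u‖ := norm_add_le _ _
      _ ≤ r + ‖u‖ := by linarith [hbound (ψ n)]
  obtain ⟨a, φ, hφ, hw⟩ := weak_seq_compact (fun n => x (ψ n)) (r + ‖u‖) hbd
  set y : ℕ → H := fun n => x (ψ (φ n)) with hy_def
  have hwy : ∀ z : H, Tendsto (fun n => ⟪z, y n⟫) atTop (nhds ⟪z, a⟫) := hw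
  have haC : a ∈ C := by
    refine hcluster a ⟨ψ ∘ φ, hψ.comp hφ, fun z => ?_⟩
    exact hwy z
  -- ‖a - u‖ ≤ r
  have hau : ‖a - u‖ ≤ r := by
    have h1 : Tendsto (fun n => ⟪a - u, y n - u⟫) atTop (nhds (⟪a - u, a - u⟫)) := by
      have := (hwy (a - u)).sub_const ⟪a - u, u⟫
      simpa only [inner_sub_right] using this
    have h2 : ∀ n, ⟪a - u, y n - u⟫ ≤ ‖a - u‖ * r := by
      intro n
      calc ⟪a - u, y n - u⟫ ≤ ‖a - u‖ * ‖y n - u‖ := real_inner_le_norm _ _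
        _ ≤ ‖a - u‖ * r := mul_le_mul_of_nonneg_left (hbound _) (norm_nonneg _)
    have h3 : ⟪a - u, a - u⟫ ≤ ‖a - u‖ * r := le_of_tendsto h1 (Eventually.of_forall h2)
    rw [real_inner_self_eq_norm_sq] at h3
    nlinarith [norm_nonneg (a - u)]
  -- a = p by uniqueness of the projection
  have hap : a = p := by
    have hm : (2⁻¹ : ℝ) • a + (2⁻¹ : ℝ) • p ∈ C :=
      hCv haC hp.1 (by norm_num) (by norm_num) (by norm_num)
    have hrm : r ≤ ‖u - ((2⁻¹ : ℝ) • a + (2⁻¹ : ℝ) • p)‖ := hp.2 _ hm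
    have hpar := parallelogram_law_with_norm ℝ (u - a) (u - p)
    have e1 : (u - a) + (u - p) = (2 : ℝ) • (u - ((2⁻¹ : ℝ) • a + (2⁻¹ : ℝ) • p)) := by
      module
    have e2 : ‖(u - a) + (u - p)‖ = 2 * ‖u - ((2⁻¹ : ℝ) • a + (2⁻¹ : ℝ) • p)‖ := by
      rw [e1, norm_smul]
      norm_num
    have e3 : (u - a) - (u - p) = p - a := by abel
    rw [e2, e3] at hpar
    have hua : ‖u - a‖ ≤ r := by rwa [norm_sub_rev]
    have hpa : ‖p - a‖ = 0 := by nlinarith [norm_nonneg (p - a), norm_nonneg (u - a)]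
    have := norm_eq_zero.mp hpa
    have : p - a = 0 := this
    linear_combination (norm := abel) -this
  -- strong convergence of the subsequence, contradiction
  have hnorm : ∀ n, ‖y n - p‖ ^ 2 = ‖y n - u‖ ^ 2 + 2 * ⟪y n - u, u - p⟫ + r ^ 2 := by
    intro n
    have : y n - p = (y n - u) + (u - p) := by abel
    rw [this, norm_add_sq_real]
  have htend : Tendsto (fun n => ⟪y n - u, u - p⟫) atTop (nhds (-(r ^ 2))) := by
    have h1 : ∀ n, ⟪y n - u, u - p⟫ = ⟪u - p, y n⟫ - ⟪u - p, u⟫ := by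
      intro n
      rw [real_inner_comm, inner_sub_right]
    have h2 := (hwy (u - p)).sub_const ⟪u - p, u⟫
    have h3 : ⟪u - p, a⟫ - ⟪u - p, u⟫ = -(r ^ 2) := by
      rw [hap]
      have : ⟪u - p, p⟫ - ⟪u - p, u⟫ = -⟪u - p, u - p⟫ := by
        rw [inner_sub_right]; ring
      rw [this, real_inner_self_eq_norm_sq]
    rw [← h3]
    simpa only [h1] using h2
  have hub : ∀ n, ε ^ 2 ≤ 2 * r ^ 2 + 2 * ⟪y n - u, u - p⟫ := by
    intro n
    have hd : ε ≤ ‖y n - p‖ := by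
      have := hψε (φ n)
      rwa [dist_eq_norm] at this
    have hε2 : ε ^ 2 ≤ ‖y n - p‖ ^ 2 := by nlinarith
    have hyu : ‖y n - u‖ ^ 2 ≤ r ^ 2 := by nlinarith [hbound (ψ (φ n)), norm_nonneg (y n - u)]
    have := hnorm n
    nlinarith
  have hlim : Tendsto (fun n => 2 * r ^ 2 + 2 * ⟪y n - u, u - p⟫) atTop (nhds 0) := by
    have := (htend.const_mul 2).const_add (2 * r ^ 2)
    simpa using this
  have : ε ^ 2 ≤ 0 := ge_of_tendsto hlim (Eventually.of_forall hub)
  nlinarith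
end

section
/- Let C be a nonempty closed convex subset of a Hilbert space H and f : C × C → ℝ an equilibrium bifunction such that f(·, y) is upper semicontinuous for each y ∈ C and f(x, ·) is convex and lower semicontinuous for each x ∈ C. Then every solution of the Minty equilibrium problem is a solution of the equilibrium problem; that is, if x* ∈ C satisfies f(y, x*) ≤ 0 for all y ∈ C, then f(x*, y) ≥ 0 for all y ∈ C. -/
open scoped RealInnerProductSpace

theorem stmt_5 {H : Type*} [NormedAddCommGroup H] [InnerProductSpace ℝ H] [CompleteSpace H]
    (C : Set H) (hC : C.Nonempty) (hCc : IsClosed C) (hCv : Convex ℝ C)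
    (f : H → H → ℝ) (hfe : ∀ x ∈ C, f x x = 0)
    (husc : ∀ y ∈ C, UpperSemicontinuousOn (fun x => f x y) C)
    (hconv : ∀ x ∈ C, ConvexOn ℝ C (f x))
    (hlsc : ∀ x ∈ C, LowerSemicontinuousOn (f x) C)
    (xstar : H) (hx : xstar ∈ C) (hMinty : ∀ y ∈ C, f y xstar ≤ 0) :
    ∀ y ∈ C, 0 ≤ f xstar y := by
  intro y hy
  by_contra h
  push_neg at h
  set g : ℝ → H := fun t => (1 - t) • xstar + t • y with hg
  have hgC : ∀ t ∈ Set.Icc (0:ℝ) 1, g t ∈ C := fun t ht =>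
    hCv hx hy (by linarith [ht.1, ht.2]) ht.1 (by ring)
  -- for t ∈ (0,1], f (g t) y ≥ 0
  have hpos : ∀ t ∈ Set.Ioc (0:ℝ) 1, 0 ≤ f (g t) y := by
    intro t ht
    have htI : t ∈ Set.Icc (0:ℝ) 1 := ⟨ht.1.le, ht.2⟩
    have hgt := hgC t htI
    have hcv := (hconv (g t) hgt).2 hx hy (show (0:ℝ) ≤ 1 - t by linarith [ht.2]) ht.1.le (by ring)
    rw [show (1 - t) • xstar + t • y = g t from rfl, hfe (g t) hgt] at hcv
    have hM := hMinty (g t) hgt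
    rw [smul_eq_mul, smul_eq_mul] at hcv
    nlinarith [ht.1, ht.2]
  -- g tends to xstar within C as t → 0+
  have hIoc : Set.Ioc (0:ℝ) 1 ∈ nhdsWithin 0 (Set.Ioi 0) :=
    Ioc_mem_nhdsGT_of_mem ⟨le_refl 0, one_pos⟩
  have htend : Filter.Tendsto g (nhdsWithin 0 (Set.Ioi 0)) (nhdsWithin xstar C) := by
    rw [tendsto_nhdsWithin_iff]
    constructor
    · have hcont : Continuous g := by continuity
      have := hcont.tendsto 0
      simpa [hg] using this.mono_left nhdsWithin_le_nhds
    · filter_upwards [hIoc] with t ht using hgC t ⟨ht.1.le, ht.2⟩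
  have husc' := husc y hy xstar hx 0 h
  have hev := htend.eventually husc'
  have : ∀ᶠ t in nhdsWithin (0:ℝ) (Set.Ioi 0), False := by
    filter_upwards [hev, hIoc] with t h1 h2
    exact absurd (hpos t h2) (not_le.mpr h1)
  exact this.exists.choose_spec
end

section
/- Let x⁰ ∈ H and let {x^k} be a sequence in H such that for every k, x^k = P_{W(x^k)}(x⁰) where W(x^k) = {y : ⟨y − x^k, x⁰ − x^k⟩ ≤ 0}, and x^{k+1} ∈ W(x^k). If {x^k} is bounded, then Σ_{k=0}^∞ ‖x^{k+1} − x^k‖² < ∞, and in particular ‖x^{k+1} − x^k‖ → 0. -/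
open scoped RealInnerProductSpace
open Filter

theorem stmt_10 {H : Type*} [NormedAddCommGroup H] [InnerProductSpace ℝ H] [CompleteSpace H]
    (x0 : H) (x : ℕ → H)
    (hproj : ∀ k, IsProj {y : H | ⟪y - x k, x0 - x k⟫ ≤ 0} x0 (x k))
    (hmem : ∀ k, x (k + 1) ∈ {y : H | ⟪y - x k, x0 - x k⟫ ≤ 0})
    (hbd : ∃ M : ℝ, ∀ k, ‖x k‖ ≤ M) :
    Summable (fun k => ‖x (k + 1) - x k‖ ^ 2) ∧
      Tendsto (fun k => ‖x (k + 1) - x k‖) atTop (nhds 0) := by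
  obtain ⟨M, hM⟩ := hbd
  set a : ℕ → ℝ := fun k => ‖x k - x0‖ ^ 2 with ha
  have key : ∀ k, ‖x (k + 1) - x k‖ ^ 2 ≤ a (k + 1) - a k := by
    intro k
    have h := hmem k
    simp only [Set.mem_setOf_eq] at h
    have expand : ‖x (k+1) - x0‖ ^ 2
        = ‖x (k+1) - x k‖ ^ 2 - 2 * ⟪x (k+1) - x k, x0 - x k⟫ + ‖x0 - x k‖ ^ 2 := by
      have : x (k+1) - x0 = (x (k+1) - x k) - (x0 - x k) := by abel
      rw [this, norm_sub_sq_real]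
    have hnorm : ‖x0 - x k‖ = ‖x k - x0‖ := norm_sub_rev _ _
    simp only [ha]
    rw [expand, hnorm]
    nlinarith
  have abound : ∀ k, a k ≤ (M + ‖x0‖) ^ 2 := by
    intro k
    have h1 : ‖x k - x0‖ ≤ M + ‖x0‖ := (norm_sub_le _ _).trans (by linarith [hM k])
    have h2 : (0:ℝ) ≤ ‖x k - x0‖ := norm_nonneg _
    simp only [ha]
    nlinarith
  have hsum : Summable (fun k => ‖x (k + 1) - x k‖ ^ 2) := by
    apply summable_of_sum_range_le (c := (M + ‖x0‖) ^ 2)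
    · intro k; positivity
    · intro n
      calc ∑ i ∈ Finset.range n, ‖x (i + 1) - x i‖ ^ 2
          ≤ ∑ i ∈ Finset.range n, (a (i + 1) - a i) :=
            Finset.sum_le_sum fun i _ => key i
        _ = a n - a 0 := Finset.sum_range_sub a n
        _ ≤ (M + ‖x0‖) ^ 2 := by
            have := abound n
            have : (0:ℝ) ≤ a 0 := by positivity
            linarith [abound n]
  refine ⟨hsum, ?_⟩
  have hsq : Tendsto (fun k => ‖x (k + 1) - x k‖ ^ 2) atTop (nhds 0) :=
    hsum.tendsto_atTop_zero
  have : Tendsto (fun k => Real.sqrt (‖x (k + 1) - x k‖ ^ 2)) atTop (nhds 0) := by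
    simpa using hsq.sqrt
  simpa [Real.sqrt_sq (norm_nonneg _)] using this
end

section
/- With z^k = (1 − θ_k)x^k + θ_k y^k for θ_k ∈ (0,1), g^k ∈ ∂₂f(z^k, z^k), f(z^k, z^k) = 0, and the linesearch inequality f(z^k, y^k) ≤ −(δβ_k/2)‖x^k − y^k‖² with δ, β_k > 0: if additionally ⟨g^k, x^k − z^k⟩ ≤ 0 (i.e., x^k ∈ H_k), then x^k = y^k. -/
open scoped RealInnerProductSpace

theorem stmt_14 {H : Type*} [NormedAddCommGroup H] [InnerProductSpace ℝ H] [CompleteSpace H]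
    (f : H → H → ℝ) (x y z g : H) (θ δ β : ℝ)
    (hθ : θ ∈ Set.Ioo (0 : ℝ) 1) (hδ : 0 < δ) (hβ : 0 < β)
    (hz : z = (1 - θ) • x + θ • y)
    (hsub : ∀ w : H, ⟪g, w - z⟫ ≤ f z w - f z z)
    (hzz : f z z = 0)
    (hls : f z y ≤ -(δ * β / 2) * ‖x - y‖ ^ 2)
    (hH : ⟪g, x - z⟫ ≤ 0) :
    x = y := by
  obtain ⟨hθ0, hθ1⟩ := hθ
  have hxz : x - z = θ • (x - y) := by rw [hz]; module
  have hyz : y - z = (1 - θ) • (y - x) := by rw [hz]; module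
  have h1 : θ * ⟪g, x - y⟫ ≤ 0 := by
    rw [← real_inner_smul_right, ← hxz]; exact hH
  have hgxy : ⟪g, x - y⟫ ≤ 0 := nonpos_of_mul_nonpos_right (by linarith [h1]) hθ0
  have h2 : (0:ℝ) ≤ ⟪g, y - z⟫ := by
    rw [hyz, real_inner_smul_right]
    have : ⟪g, y - x⟫ = -⟪g, x - y⟫ := by
      rw [← inner_neg_right]; congr 1; abel
    rw [this]
    nlinarith
  have h3 := hsub y
  rw [hzz, sub_zero] at h3
  have h4 : (0:ℝ) ≤ -(δ * β / 2) * ‖x - y‖ ^ 2 := le_trans h2 (le_trans h3 hls)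
  have h5 : ‖x - y‖ ^ 2 ≤ 0 := by nlinarith [mul_pos hδ hβ]
  have : x - y = 0 := by
    have := sq_nonneg ‖x - y‖
    have : ‖x - y‖ = 0 := by nlinarith
    exact norm_eq_zero.mp this
  exact sub_eq_zero.mp this
end

section
/- Let g^k ∈ ∂₂f(z^k, z^k), f(z^k, z^k) = 0, z^k = (1 − θ_k)x^k + θ_k y^k with θ_k ∈ (0,1), and suppose f(z^k, y^k) ≤ −(δβ_k/2)‖x^k − y^k‖² with x^k ≠ y^k, δ ∈ (0,1), β_k > 0. Then θ_k⟨g^k, x^k − y^k⟩ ≥ (θ_k/(1 − θ_k))(δβ_k/2)‖x^k − y^k‖² > 0. -/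
open scoped RealInnerProductSpace

theorem stmt_16 {H : Type*} [NormedAddCommGroup H] [InnerProductSpace ℝ H] [CompleteSpace H]
    (f : H → H → ℝ) (x y z g : H) (θ δ β : ℝ)
    (hθ : θ ∈ Set.Ioo (0 : ℝ) 1) (hδ : δ ∈ Set.Ioo (0 : ℝ) 1) (hβ : 0 < β)
    (hz : z = (1 - θ) • x + θ • y)
    (hsub : ∀ w : H, ⟪g, w - z⟫ ≤ f z w) (hzz : f z z = 0)
    (hls : f z y ≤ -(δ * β / 2) * ‖x - y‖ ^ 2) (hne : x ≠ y) :
    θ / (1 - θ) * (δ * β / 2) * ‖x - y‖ ^ 2 ≤ θ * ⟪g, x - y⟫ ∧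
      0 < θ / (1 - θ) * (δ * β / 2) * ‖x - y‖ ^ 2 := by
  obtain ⟨hθ0, hθ1⟩ := hθ
  obtain ⟨hδ0, hδ1⟩ := hδ
  have h1θ : (0:ℝ) < 1 - θ := by linarith
  have hN : (0:ℝ) < ‖x - y‖ ^ 2 := by
    have h : (0:ℝ) < ‖x - y‖ := norm_sub_pos_iff.mpr hne
    positivity
  have h1 : ⟪g, y - z⟫ ≤ -(δ * β / 2) * ‖x - y‖ ^ 2 := (hsub y).trans hls
  have hyz : y - z = (1 - θ) • (y - x) := by rw [hz]; module
  have h2 : ⟪g, y - z⟫ = (1 - θ) * ⟪g, y - x⟫ := by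
    rw [hyz, real_inner_smul_right]
  have h3 : ⟪g, y - x⟫ = -⟪g, x - y⟫ := by rw [← inner_neg_right, neg_sub]
  have h4 : δ * β / 2 * ‖x - y‖ ^ 2 ≤ (1 - θ) * ⟪g, x - y⟫ := by
    rw [h2, h3] at h1; nlinarith
  constructor
  · rw [div_mul_eq_mul_div, div_mul_eq_mul_div, div_le_iff₀ h1θ]
    nlinarith
  · positivity
end

section
/- Let x⁰ ∈ H and {x^k} a sequence with x^k = P_{W(x^k)}(x⁰) for each k, where W(x^k) = {y : ⟨y − x^k, x⁰ − x^k⟩ ≤ 0}. If every weak cluster point of {x^k} lies in the closed convex set D = ∩_{k=0}^∞ W(x^k) (assumed nonempty), then x^k converges strongly to P_D(x⁰). -/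
open scoped RealInnerProductSpace
open Filter

/-- Diagonal extraction: from a uniformly bounded family of real sequences indexed by `m`,
extract a single subsequence along which all of them converge. -/
lemma diag_subseq (u : ℕ → ℕ → ℝ) (C : ℝ) (hb : ∀ m n, |u m n| ≤ C) :
    ∃ ψ : ℕ → ℕ, StrictMono ψ ∧ ∀ m, ∃ l : ℝ, Tendsto (fun n => u m (ψ n)) atTop (nhds l) := by
  have key : ∀ m (f : ℕ → ℕ), ∃ σ : ℕ → ℕ, StrictMono σ ∧
      ∃ l : ℝ, Tendsto (fun n => u m (f (σ n))) atTop (nhds l) := by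
    intro m f
    have hmem : ∀ n, u m (f n) ∈ Metric.closedBall (0 : ℝ) C := by
      intro n
      simpa [Real.dist_eq] using hb m (f n)
    obtain ⟨l, -, σ, hσ, hl⟩ := tendsto_subseq_of_bounded Metric.isBounded_closedBall hmem
    exact ⟨σ, hσ, l, hl⟩
  choose σ hσmono lim hlim using key
  set Φ : ℕ → ℕ → ℕ := fun m => Nat.rec id (fun k f => f ∘ σ k f) m with hΦ
  have Φsucc : ∀ m, Φ (m + 1) = Φ m ∘ σ m (Φ m) := fun m => rfl
  have Φmono : ∀ m, StrictMono (Φ m) := by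
    intro m; induction m with
    | zero => exact strictMono_id
    | succ k ih => exact ih.comp (hσmono k (Φ k))
  have Φdecomp : ∀ m k, ∃ g : ℕ → ℕ, (∀ n, n ≤ g n) ∧ ∀ n, Φ (m + k) n = Φ m (g n) := by
    intro m k; induction k with
    | zero => exact ⟨id, fun n => le_rfl, fun n => rfl⟩
    | succ k ih =>
      obtain ⟨g, hg, hgeq⟩ := ih
      refine ⟨g ∘ σ (m + k) (Φ (m + k)), fun n => ?_, fun n => ?_⟩
      · exact le_trans (hσmono (m + k) (Φ (m + k))).le_apply (hg _)
      · exact hgeq _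
  refine ⟨fun n => Φ (n + 1) n, ?_, ?_⟩
  · apply strictMono_nat_of_lt_succ
    intro n
    have h1 : Φ (n + 1) n < Φ (n + 1) (n + 1) := (Φmono (n + 1)) (Nat.lt_succ_self n)
    have h2 : Φ (n + 1) (n + 1) ≤ Φ (n + 1) (σ (n + 1) (Φ (n + 1)) (n + 1)) :=
      (Φmono (n + 1)).monotone (hσmono (n + 1) (Φ (n + 1))).le_apply
    exact lt_of_lt_of_le h1 h2
  · intro m
    refine ⟨lim m (Φ m), ?_⟩
    have hm : Tendsto (fun n => u m (Φ (m + 1) n)) atTop (nhds (lim m (Φ m))) := hlim m (Φ m)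
    rw [Metric.tendsto_atTop] at hm ⊢
    intro ε hε
    obtain ⟨N, hN⟩ := hm ε hε
    refine ⟨max N m, fun n hn => ?_⟩
    have hnm : m ≤ n := le_trans (le_max_right _ _) hn
    obtain ⟨g, hg, hgeq⟩ := Φdecomp (m + 1) (n - m)
    have harith : (m + 1) + (n - m) = n + 1 := by omega
    have heq2 : Φ (n + 1) n = Φ (m + 1) (g n) := by rw [← harith]; exact hgeq n
    show dist (u m (Φ (n + 1) n)) (lim m (Φ m)) < ε
    rw [heq2]
    exact hN (g n) (le_trans (le_trans (le_max_left _ _) hn) (hg n))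

/-- Every norm-bounded sequence in a real Hilbert space has a weak cluster point. -/
lemma exists_weakClusterPt_of_bounded {H : Type*} [NormedAddCommGroup H]
    [InnerProductSpace ℝ H] [CompleteSpace H] (x : ℕ → H) (C : ℝ) (hb : ∀ n, ‖x n‖ ≤ C) :
    ∃ a : H, WeakClusterPt x a := by
  have hC0 : 0 ≤ C := le_trans (norm_nonneg (x 0)) (hb 0)
  have hbb : ∀ m n, |⟪x m, x n⟫| ≤ C * C := fun m n =>
    le_trans (abs_real_inner_le_norm _ _) (mul_le_mul (hb m) (hb n) (norm_nonneg _) hC0)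
  obtain ⟨ψ, hψ, hconv⟩ := diag_subseq (fun m n => ⟪x m, x n⟫) (C * C) hbb
  set y : ℕ → H := x ∘ ψ with hy
  have hby : ∀ n, ‖y n‖ ≤ C := fun n => hb (ψ n)
  have hspan : ∀ z ∈ Submodule.span ℝ (Set.range x),
      ∃ l : ℝ, Tendsto (fun n => ⟪z, y n⟫) atTop (nhds l) := by
    intro z hz
    induction hz using Submodule.span_induction with
    | mem w hw => obtain ⟨m, rfl⟩ := hw; exact hconv m
    | zero => exact ⟨0, by simpa using (tendsto_const_nhds : Tendsto (fun _ : ℕ => (0:ℝ)) atTop _)⟩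
    | add w v hw hv ihw ihv =>
      obtain ⟨l1, h1⟩ := ihw; obtain ⟨l2, h2⟩ := ihv
      exact ⟨l1 + l2, by simpa [inner_add_left] using h1.add h2⟩
    | smul c w hw ihw =>
      obtain ⟨l, h⟩ := ihw
      exact ⟨c * l, by simpa [real_inner_smul_left] using h.const_mul c⟩
  have hclos : ∀ z ∈ closure ((Submodule.span ℝ (Set.range x) : Submodule ℝ H) : Set H),
      ∃ l : ℝ, Tendsto (fun n => ⟪z, y n⟫) atTop (nhds l) := by
    intro z hz
    have hcauchy : CauchySeq (fun n => ⟪z, y n⟫) := by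
      rw [Metric.cauchySeq_iff]
      intro ε hε
      have hB : (0:ℝ) < C + 1 := by linarith
      obtain ⟨w, hw, hwz⟩ := Metric.mem_closure_iff.mp hz (ε / (4 * (C + 1))) (by positivity)
      obtain ⟨l, hl⟩ := hspan w hw
      obtain ⟨N, hN⟩ := Metric.cauchySeq_iff.mp hl.cauchySeq (ε / 2) (by linarith)
      refine ⟨N, fun m hm n hn => ?_⟩
      have hzw : ‖z - w‖ < ε / (4 * (C + 1)) := by rwa [← dist_eq_norm]
      have key : ∀ k, |⟪z - w, y k⟫| ≤ ε / 4 := by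
        intro k
        have h1 : |⟪z - w, y k⟫| ≤ ‖z - w‖ * ‖y k‖ := abs_real_inner_le_norm _ _
        have h2 : ‖y k‖ ≤ C := hby k
        have h3 : ‖z - w‖ * ‖y k‖ ≤ ‖z - w‖ * (C + 1) :=
          mul_le_mul_of_nonneg_left (by linarith) (norm_nonneg _)
        have h4 : ‖z - w‖ * (C + 1) < (ε / (4 * (C + 1))) * (C + 1) :=
          mul_lt_mul_of_pos_right hzw hB
        have h5 : (ε / (4 * (C + 1))) * (C + 1) = ε / 4 := by field_simp
        linarith
      have e : ⟪z, y m⟫ - ⟪z, y n⟫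
          = (⟪z - w, y m⟫ - ⟪z - w, y n⟫) + (⟪w, y m⟫ - ⟪w, y n⟫) := by
        simp only [inner_sub_left]; ring
      have hWdist : |⟪w, y m⟫ - ⟪w, y n⟫| < ε / 2 := by
        have h := hN m hm n hn; rwa [Real.dist_eq] at h
      rw [Real.dist_eq, e]
      calc |(⟪z - w, y m⟫ - ⟪z - w, y n⟫) + (⟪w, y m⟫ - ⟪w, y n⟫)|
          ≤ |⟪z - w, y m⟫ - ⟪z - w, y n⟫| + |⟪w, y m⟫ - ⟪w, y n⟫| := abs_add_le _ _
        _ ≤ (|⟪z - w, y m⟫| + |⟪z - w, y n⟫|) + |⟪w, y m⟫ - ⟪w, y n⟫| := by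
            have h3 := abs_sub (⟪z - w, y m⟫) (⟪z - w, y n⟫); linarith
        _ < ε := by have := key m; have := key n; linarith
    exact cauchySeq_tendsto_of_complete hcauchy
  have hall : ∀ z : H, ∃ l : ℝ, Tendsto (fun n => ⟪z, y n⟫) atTop (nhds l) := by
    intro z
    set M := (Submodule.span ℝ (Set.range x)).topologicalClosure with hM
    haveI : CompleteSpace M := (Submodule.isClosed_topologicalClosure _).completeSpace_coe
    set zM : H := (M.orthogonalProjectionOnto z : H) with hzM
    have hyM : ∀ n, y n ∈ M := fun n =>
      Submodule.le_topologicalClosure _ (Submodule.subset_span ⟨ψ n, rfl⟩)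
    have hperp : z - zM ∈ Mᗮ := Submodule.sub_starProjection_mem_orthogonal z
    have heq : ∀ n, ⟪z, y n⟫ = ⟪zM, y n⟫ := by
      intro n
      have h0 : ⟪y n, z - zM⟫ = 0 := (Submodule.mem_orthogonal M (z - zM)).mp hperp (y n) (hyM n)
      have h1 : ⟪z - zM, y n⟫ = 0 := by rw [real_inner_comm]; exact h0
      have h2 : ⟪z, y n⟫ - ⟪zM, y n⟫ = 0 := by rw [← inner_sub_left]; exact h1
      linarith
    have hmem : zM ∈ closure ((Submodule.span ℝ (Set.range x) : Submodule ℝ H) : Set H) := by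
      have h' : zM ∈ (((Submodule.span ℝ (Set.range x)).topologicalClosure : Submodule ℝ H) : Set H) :=
        (M.orthogonalProjectionOnto z).2
      exact (Submodule.topologicalClosure_coe (Submodule.span ℝ (Set.range x))).subset h'
    obtain ⟨l, hl⟩ := hclos zM hmem
    exact ⟨l, hl.congr fun n => (heq n).symm⟩
  choose L hL using hall
  have hLadd : ∀ z w, L (z + w) = L z + L w := by
    intro z w
    refine tendsto_nhds_unique (hL (z + w)) ?_
    simpa [inner_add_left] using (hL z).add (hL w)
  have hLsmul : ∀ (c : ℝ) (z : H), L (c • z) = c * L z := by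
    intro c z
    refine tendsto_nhds_unique (hL (c • z)) ?_
    simpa [real_inner_smul_left] using (hL z).const_mul c
  have hLbound : ∀ z, ‖L z‖ ≤ C * ‖z‖ := by
    intro z
    rw [Real.norm_eq_abs]
    refine le_of_tendsto (hL z).abs (Eventually.of_forall fun n => ?_)
    calc |⟪z, y n⟫| ≤ ‖z‖ * ‖y n‖ := abs_real_inner_le_norm _ _
      _ ≤ ‖z‖ * C := mul_le_mul_of_nonneg_left (hby n) (norm_nonneg z)
      _ = C * ‖z‖ := mul_comm _ _
  let f : H →L[ℝ] ℝ := LinearMap.mkContinuous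
    { toFun := L, map_add' := hLadd, map_smul' := fun c z => by simpa using hLsmul c z } C hLbound
  set a : H := (InnerProductSpace.toDual ℝ H).symm f with ha
  have haz : ∀ z : H, ⟪a, z⟫ = L z := by
    intro z
    have h1 : InnerProductSpace.toDual ℝ H a = f := by
      rw [ha]; exact (InnerProductSpace.toDual ℝ H).apply_symm_apply f
    have h2 : ⟪a, z⟫ = (InnerProductSpace.toDual ℝ H a) z :=
      (InnerProductSpace.toDual_apply_apply (x := a) (y := z)).symm
    rw [h2, h1]; rfl
  refine ⟨a, ψ, hψ, fun z => ?_⟩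
  have hza : ⟪z, a⟫ = L z := by rw [real_inner_comm]; exact haz z
  rw [hza]
  exact hL z

theorem stmt_17 {H : Type*} [NormedAddCommGroup H] [InnerProductSpace ℝ H] [CompleteSpace H]
    (x0 : H) (x : ℕ → H)
    (hproj : ∀ k, IsProj {y : H | ⟪y - x k, x0 - x k⟫ ≤ 0} x0 (x k))
    (D : Set H) (hD : D = ⋂ k, {y : H | ⟪y - x k, x0 - x k⟫ ≤ 0})
    (hDne : D.Nonempty)
    (hcluster : ∀ a : H, WeakClusterPt x a → a ∈ D)
    (p : H) (hp : IsProj D x0 p) :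
    Tendsto x atTop (nhds p) := by
  have hpD : p ∈ D := hp.1
  have hpW : ∀ k, ⟪p - x k, x0 - x k⟫ ≤ 0 := by
    intro k
    have h := hD ▸ hpD
    exact Set.mem_iInter.mp h k
  have h1 : ∀ k, ‖x0 - x k‖ ≤ ‖x0 - p‖ := fun k => (hproj k).2 p (hpW k)
  have h2 : ∀ k, ‖x k - p‖ ^ 2 ≤ ‖x0 - p‖ ^ 2 - ‖x0 - x k‖ ^ 2 := by
    intro k
    have e : x0 - p = (x0 - x k) + (x k - p) := by abel
    have expand : ‖x0 - p‖ ^ 2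
        = ‖x0 - x k‖ ^ 2 + 2 * ⟪x0 - x k, x k - p⟫ + ‖x k - p‖ ^ 2 := by
      rw [e]; exact norm_add_sq_real _ _
    have hin : ⟪x0 - x k, x k - p⟫ = -⟪p - x k, x0 - x k⟫ := by
      rw [real_inner_comm]
      have hneg : p - x k = -(x k - p) := by abel
      rw [hneg, inner_neg_left, neg_neg]
    have hW := hpW k
    rw [hin] at expand
    linarith
  have hlim : Tendsto (fun k => ‖x0 - x k‖) atTop (nhds ‖x0 - p‖) := by
    rw [Metric.tendsto_atTop]
    intro ε hε
    by_contra hcon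
    push_neg at hcon
    have hfreq : ∃ᶠ k in atTop, ‖x0 - x k‖ ≤ ‖x0 - p‖ - ε := by
      rw [frequently_atTop]
      intro N
      obtain ⟨k, hk, hdist⟩ := hcon N
      refine ⟨k, hk, ?_⟩
      rw [Real.dist_eq] at hdist
      have habs : ε ≤ |‖x0 - x k‖ - ‖x0 - p‖| := hdist
      have hle := h1 k
      rw [abs_sub_comm, abs_of_nonneg (by linarith : (0:ℝ) ≤ ‖x0 - p‖ - ‖x0 - x k‖)] at habs
      linarith
    obtain ⟨φ, hφ, hφle⟩ := Filter.extraction_of_frequently_atTop hfreq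
    have hbd : ∀ n, ‖(x ∘ φ) n‖ ≤ ‖x0‖ + ‖x0 - p‖ := by
      intro n
      have htri : ‖x (φ n)‖ ≤ ‖x0‖ + ‖x0 - x (φ n)‖ := by
        have h := norm_add_le x0 (x (φ n) - x0)
        have he : x0 + (x (φ n) - x0) = x (φ n) := by abel
        rw [he] at h
        have : ‖x (φ n) - x0‖ = ‖x0 - x (φ n)‖ := norm_sub_rev _ _
        linarith
      have := h1 (φ n)
      calc ‖(x ∘ φ) n‖ = ‖x (φ n)‖ := rfl
        _ ≤ ‖x0‖ + ‖x0 - x (φ n)‖ := htri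
        _ ≤ ‖x0‖ + ‖x0 - p‖ := by linarith
    obtain ⟨a, τ, hτ, hwl⟩ := exists_weakClusterPt_of_bounded (x ∘ φ) _ hbd
    have haW : WeakClusterPt x a := ⟨φ ∘ τ, hφ.comp hτ, hwl⟩
    have haD : a ∈ D := hcluster a haW
    have hpa : ‖x0 - p‖ ≤ ‖x0 - a‖ := hp.2 a haD
    set σ : ℕ → ℕ := φ ∘ τ with hσ
    have hg : Tendsto (fun n => ⟪x0 - a, x0 - x (σ n)⟫) atTop (nhds (‖x0 - a‖ ^ 2)) := by
      have h1' : Tendsto (fun n => ⟪x0 - a, x (σ n)⟫) atTop (nhds ⟪x0 - a, a⟫) := hwl (x0 - a)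
      have h2' : Tendsto (fun n => ⟪x0 - a, x0⟫ - ⟪x0 - a, x (σ n)⟫) atTop
          (nhds (⟪x0 - a, x0⟫ - ⟪x0 - a, a⟫)) := tendsto_const_nhds.sub h1'
      have e1 : ∀ n, ⟪x0 - a, x0⟫ - ⟪x0 - a, x (σ n)⟫ = ⟪x0 - a, x0 - x (σ n)⟫ := by
        intro n; rw [inner_sub_right]
      have e2 : ⟪x0 - a, x0⟫ - ⟪x0 - a, a⟫ = ‖x0 - a‖ ^ 2 := by
        rw [← inner_sub_right, real_inner_self_eq_norm_sq]
      rw [e2] at h2'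
      exact h2'.congr e1
    have hub : ∀ n, ⟪x0 - a, x0 - x (σ n)⟫ ≤ ‖x0 - a‖ * (‖x0 - p‖ - ε) := by
      intro n
      calc ⟪x0 - a, x0 - x (σ n)⟫ ≤ ‖x0 - a‖ * ‖x0 - x (σ n)‖ := real_inner_le_norm _ _
        _ ≤ ‖x0 - a‖ * (‖x0 - p‖ - ε) :=
          mul_le_mul_of_nonneg_left (hφle (τ n)) (norm_nonneg _)
    have hfinal : ‖x0 - a‖ ^ 2 ≤ ‖x0 - a‖ * (‖x0 - p‖ - ε) :=
      le_of_tendsto hg (Eventually.of_forall hub)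
    have hεle : (0:ℝ) ≤ ‖x0 - p‖ - ε := le_trans (norm_nonneg _) (hφle (τ 0))
    nlinarith [norm_nonneg (x0 - a), norm_nonneg (x0 - p)]
  have hsq : Tendsto (fun k => ‖x k - p‖ ^ 2) atTop (nhds 0) := by
    have hg : Tendsto (fun k => ‖x0 - p‖ ^ 2 - ‖x0 - x k‖ ^ 2) atTop (nhds 0) := by
      have hpow : Tendsto (fun k => ‖x0 - x k‖ ^ 2) atTop (nhds (‖x0 - p‖ ^ 2)) := hlim.pow 2
      have hc : Tendsto (fun _ : ℕ => ‖x0 - p‖ ^ 2) atTop (nhds (‖x0 - p‖ ^ 2)) :=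
        tendsto_const_nhds
      have := hc.sub hpow
      simpa using this
    exact squeeze_zero (fun k => sq_nonneg _) h2 hg
  have hnorm : Tendsto (fun k => ‖x k - p‖) atTop (nhds 0) := by
    have hs := hsq.sqrt
    simp only [Real.sqrt_zero] at hs
    refine hs.congr fun k => ?_
    exact Real.sqrt_sq (norm_nonneg _)
  rw [tendsto_iff_norm_sub_tendsto_zero]
  exact hnorm
end
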